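/- arXiv:1103.0902 — 3 statements merged into one kernel-verified Lean document; each statement's English description precedes it below -/
import Mathlib

section
/- Let K be a field, A ⊆ K a Dedekind domain, and V' a finite-dimensional K-vector space. Suppose R and S are A-lattices of V' with span_K(R) = span_K(S) = V', and write R = m_R·b_{R,0} ⊕ ⊕_{i=1}^{n} A·b_{R,i} and S = m_S·b_{S,0} ⊕ ⊕_{i=1}^{n} A·b_{S,i} where m_R, m_S are fractional ideals of A and (b_{R,i}), (b_{S,i}) are K-bases of V'. Then [R:S]'_A = m_S · m_R^{-1} · det_{B_S,B_R}(Id_{V'}), where det_{B_S,B_R}(Id) is the determinant of the change-of-basis matrix from B_S to B_R. -/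
open Submodule

variable (A K V : Type*) [CommRing A] [Field K] [Algebra A K]
  [AddCommGroup V] [Module K V] [Module A V] [IsScalarTower A K V]

/-- `R` is an `A`-lattice of the `K`-vector space `V`: finitely generated, and its
`A`-rank equals the `K`-dimension of its `K`-span. -/
def IsLattice (R : Submodule A V) : Prop :=
  R.FG ∧ Module.rank A R = Module.rank K (span K (R : Set V))

/-- The index-module `[R:S]'_A`, as a subset of `K`: the set of determinants of
`K`-endomorphisms `u` of `V' = span_K(R ∪ S)` such that `u(R) ⊆ S`. -/
def indexSet (R S : Submodule A V) : Set K :=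
  { d : K | ∃ u : (span K ((R : Set V) ∪ (S : Set V))) →ₗ[K]
      (span K ((R : Set V) ∪ (S : Set V))),
      LinearMap.det u = d ∧
      ∀ x : (span K ((R : Set V) ∪ (S : Set V))), (x : V) ∈ R → (u x : V) ∈ S }


section Aux

variable {A K V : Type*} [CommRing A] [Field K] [Algebra A K]
  [AddCommGroup V] [Module K V] [Module A V] [IsScalarTower A K V]

private lemma mem_lattice_iff {n : ℕ} (b : Module.Basis (Fin (n+1)) K V)
    (m : Fin (n+1) → Submodule A K) (x : V) :
    x ∈ (⨆ i, (m i).map ((LinearMap.toSpanSingleton K V (b i)).restrictScalars A)) ↔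
      ∀ i, b.repr x i ∈ m i := by
  constructor
  · intro hx
    have key : (⨆ i, (m i).map ((LinearMap.toSpanSingleton K V (b i)).restrictScalars A)) ≤
        ⨅ i, (m i).comap (((b.coord i).restrictScalars A)) := by
      refine iSup_le fun i => ?_
      rintro _ ⟨c, hc, rfl⟩
      simp only [mem_iInf, mem_comap, LinearMap.coe_restrictScalars, LinearMap.toSpanSingleton_apply]
      intro j
      rw [Module.Basis.coord_apply, LinearEquiv.map_smul, Module.Basis.repr_self, Finsupp.smul_apply,
        Finsupp.single_apply]
      by_cases h : i = j
      · subst h; simpa using hc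
      · simp [h]
    have := key hx
    simp only [mem_iInf, mem_comap, LinearMap.coe_restrictScalars, Module.Basis.coord_apply] at this
    exact this
  · intro h
    have hx : x = ∑ i, b.repr x i • b i := (b.sum_repr x).symm
    rw [hx]
    refine sum_mem fun i _ => ?_
    exact le_iSup (fun i => (m i).map ((LinearMap.toSpanSingleton K V (b i)).restrictScalars A)) i
      ⟨b.repr x i, h i, rfl⟩

private lemma prod_mem_prod' {ι R B : Type*} [CommSemiring R] [CommSemiring B] [Algebra R B]
    (s : Finset ι) (M : ι → Submodule R B) (x : ι → B) (h : ∀ i ∈ s, x i ∈ M i) :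
    (∏ i ∈ s, x i) ∈ ∏ i ∈ s, M i := by
  classical
  induction s using Finset.induction with
  | empty => simpa using Submodule.mem_one.mpr ⟨1, map_one _⟩
  | insert a s hni ih =>
    rw [Finset.prod_insert hni, Finset.prod_insert hni]
    exact mul_mem_mul (h a (Finset.mem_insert_self a s))
      (ih fun i hi => h i (Finset.mem_insert_of_mem hi))

private lemma pairwise_dep [Nontrivial A] {n : ℕ} (hAK : Function.Injective (algebraMap A K))
    (bR : Module.Basis (Fin (n+1)) K V) (mR : Submodule A K) (R : Submodule A V)
    (hrank : Module.rank A R = Module.rank K (span K (R : Set V)))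
    (hRspan : span K (R : Set V) = ⊤)
    (hRdef : R = ⨆ i : Fin (n + 1),
      ((if i = 0 then mR else 1).map ((LinearMap.toSpanSingleton K V (bR i)).restrictScalars A))) :
    ∀ x ∈ mR, ∀ y ∈ mR, ¬ LinearIndependent A ![x, y] := by
  intro x hx y hy hind
  -- the family
  set w : (Fin 2 ⊕ Fin n) → V := Sum.elim (![x • bR 0, y • bR 0]) (fun i => bR i.succ) with hw
  have hgen : ∀ c ∈ mR, ∀ k, bR.repr (c • bR 0) k ∈ (if k = 0 then mR else (1 : Submodule A K)) := by
    intro c hc k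
    rw [LinearEquiv.map_smul, Module.Basis.repr_self, Finsupp.smul_apply, Finsupp.single_apply]
    by_cases h : (0 : Fin (n+1)) = k
    · simp only [← h, if_pos rfl, smul_eq_mul, mul_one]
      simpa using hc
    · have h' : ¬ (k = 0) := fun hk => h hk.symm
      simp [h, h']
  have hmemR : ∀ i, w i ∈ R := by
    rintro (i | i) <;> rw [hRdef, mem_lattice_iff]
    · intro k
      fin_cases i <;>
        simp only [hw, Sum.elim_inl, Fin.isValue, Matrix.cons_val_zero, Matrix.cons_val_one,
          Matrix.head_cons]
      · exact hgen x hx k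
      · exact hgen y hy k
    · intro k
      simp only [hw, Sum.elim_inr]
      rw [Module.Basis.repr_self, Finsupp.single_apply]
      by_cases h : i.succ = k
      · have hk : k ≠ 0 := by rw [← h]; exact (Fin.succ_ne_zero i)
        rw [if_pos h, if_neg hk]
        exact Submodule.mem_one.mpr ⟨1, map_one _⟩
      · simp [h]
  have hli : LinearIndependent A w := by
    rw [Fintype.linearIndependent_iff]
    intro g hg
    set c : Fin (n+1) → K := Fin.cases (g (Sum.inl 0) • x + g (Sum.inl 1) • y)
      (fun i => algebraMap A K (g (Sum.inr i))) with hc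
    have hsum : ∑ j, c j • bR j = 0 := by
      rw [Fin.sum_univ_succ]
      rw [← hg, Fintype.sum_sum_type]
      congr 1
      · rw [Fin.sum_univ_two]
        simp only [hc, Fin.cases_zero, hw, Sum.elim_inl, Matrix.cons_val_zero,
          Matrix.cons_val_one, Matrix.head_cons, add_smul, smul_assoc]
      · refine Finset.sum_congr rfl fun i _ => ?_
        simp only [hc, Fin.cases_succ, hw, Sum.elim_inr, algebraMap_smul]
    have hc0 : ∀ j, c j = 0 :=
      Fintype.linearIndependent_iff.mp bR.linearIndependent c hsum
    have hxy := (LinearIndependent.pair_iff.mp hind) (g (Sum.inl 0)) (g (Sum.inl 1))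
      (by simpa [hc] using hc0 0)
    rintro (i | i)
    · fin_cases i
      · exact hxy.1
      · exact hxy.2
    · have := hc0 i.succ
      simp only [hc, Fin.cases_succ] at this
      exact hAK (by simpa using this)
  have hli' : LinearIndependent A (fun i => (⟨w i, hmemR i⟩ : R)) := by
    apply LinearIndependent.of_comp R.subtype
    exact hli
  have hcard := hli'.cardinal_lift_le_rank
  rw [hrank, hRspan] at hcard
  have h1 : Module.rank K (⊤ : Submodule K V) = (n+1 : ℕ) := by
    rw [rank_top, rank_eq_card_basis bR]
    simp
  rw [h1] at hcard
  simp only [Cardinal.mk_sum, Cardinal.mk_fintype, Fintype.card_fin, Cardinal.lift_natCast,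
    Cardinal.lift_add, Cardinal.lift_natCast, Nat.cast_ofNat] at hcard
  norm_num at hcard
  have h2 : ((n + 2 : ℕ) : Cardinal) ≤ ((n + 1 : ℕ) : Cardinal) := by
    push_cast
    rwa [add_comm] at hcard
  exact absurd (Nat.cast_le.mp h2) (by omega)

private lemma mem_mul_div_of {A K : Type*} [CommRing A] [Field K] [Algebra A K]
    {mR mS : Submodule A K} (hone : (1 : K) ∈ mR * (1 / mR)) {z : K}
    (hz : ∀ c ∈ mR, c * z ∈ mS) : z ∈ mS * (1 / mR) := by
  have key : ∀ w ∈ mR * (1 / mR), w * z ∈ mS * (1 / mR) := by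
    intro w hw
    refine Submodule.mul_induction_on hw (fun p hp q hq => ?_) (fun a b ha hb => ?_)
    · have h : p * q * z = (p * z) * q := by ring
      rw [h]
      exact mul_mem_mul (hz p hp) hq
    · rw [add_mul]
      exact Submodule.add_mem _ ha hb
  simpa using key 1 hone

private lemma mul_mem_of_mem_mul_div {A K : Type*} [CommRing A] [Field K] [Algebra A K]
    {mR mS : Submodule A K} {z : K} (hz : z ∈ mS * (1 / mR)) :
    ∀ c ∈ mR, z * c ∈ mS := by
  refine Submodule.mul_induction_on hz (fun p hp q hq c hc => ?_) (fun a b ha hb c hc => ?_)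
  · have hqc : q * c ∈ (1 : Submodule A K) :=
      (Submodule.mem_div_iff_forall_mul_mem.mp hq) c hc
    obtain ⟨a, ha⟩ := Submodule.mem_one.mp hqc
    have h : p * q * c = a • p := by rw [Algebra.smul_def, ha]; ring
    rw [h]
    exact Submodule.smul_mem _ _ hp
  · rw [add_mul]
    exact Submodule.add_mem _ (ha c hc) (hb c hc)

end Aux

section Aux2
variable {A K : Type*} [CommRing A] [IsDedekindDomain A] [Field K] [Algebra A K]

/-- If `mR` is a nonzero f.g. `A`-submodule of `K` all of whose elements are pairwise
`A`-dependent, then `mR` is invertible: `1 ∈ mR * (1 / mR)`. -/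
private lemma one_mem_mul_one_div (hAK : Function.Injective (algebraMap A K))
    (mR : Submodule A K) (hmR : mR ≠ ⊥) (hfg : mR.FG)
    (hdep : ∀ x ∈ mR, ∀ y ∈ mR, ¬ LinearIndependent A ![x, y]) :
    (1 : K) ∈ mR * (1 / mR) := by
  obtain ⟨g, hgmem, hg0⟩ := Submodule.exists_mem_ne_zero_of_ne_bot hmR
  set F := FractionRing A
  have hinj : Function.Injective ⇑(Algebra.ofId A K) := hAK
  let φ : F →ₐ[A] K := IsFractionRing.liftAlgHom (K := F) hinj
  have hφinj : Function.Injective φ := φ.toRingHom.injective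
  -- ψ : F →ₗ[A] K, q ↦ g * φ q
  let ψ : F →ₗ[A] K := {
    toFun := fun q => g * φ q
    map_add' := by intro a b; simp [mul_add]
    map_smul' := by intro a b; simp [Algebra.smul_def, map_mul]; ring }
  have hψinj : Function.Injective ψ := by
    intro a b hab
    simp only [ψ, LinearMap.coe_mk, AddHom.coe_mk] at hab
    exact hφinj (mul_left_cancel₀ hg0 hab)
  -- every element of mR is in the range of ψ
  have hrange : ∀ x ∈ mR, ∃ q : F, ψ q = x := by
    intro x hx
    have h2 := hdep x hx g hgmem
    rw [LinearIndependent.pair_iff] at h2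
    push_neg at h2
    obtain ⟨s, t, hst, hne⟩ := h2
    have hs : s ≠ 0 := by
      rintro rfl
      apply hne rfl
      have : algebraMap A K t * g = 0 := by
        simpa [Algebra.smul_def] using hst
      rcases mul_eq_zero.mp this with h | h
      · exact (map_eq_zero_iff _ hAK).mp h
      · exact absurd h hg0
    refine ⟨algebraMap A F (-t) / algebraMap A F s, ?_⟩
    have hsK : algebraMap A K s ≠ 0 := fun h => hs ((map_eq_zero_iff _ hAK).mp h)
    have hsF : algebraMap A F s ≠ 0 := fun h => hs ((map_eq_zero_iff _ (IsFractionRing.injective A F)).mp h)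
    simp only [ψ, LinearMap.coe_mk, AddHom.coe_mk, map_div₀, AlgHom.commutes]
    field_simp
    simp only [map_neg]
    have hst' : algebraMap A K s * x + algebraMap A K t * g = 0 := by
      simpa only [Algebra.smul_def] using hst
    linear_combination -hst'
  -- transport mR to a fractional ideal of F
  set J : Submodule A F := Submodule.comap ψ mR with hJ
  have hmem_J : ∀ q, q ∈ J ↔ ψ q ∈ mR := fun q => Iff.rfl
  have hmapJ : Submodule.map ψ J = mR := by
    apply le_antisymm (Submodule.map_le_iff_le_comap.mpr le_rfl)
    intro x hx
    obtain ⟨q, hq⟩ := hrange x hx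
    exact ⟨q, show ψ q ∈ mR from hq ▸ hx, hq⟩
  have hJfg : J.FG := by
    apply Submodule.fg_of_fg_map_injective ψ hψinj
    rw [hmapJ]; exact hfg
  have hJne : J ≠ ⊥ := by
    intro hbot
    have h1 : (1 : F) ∈ J := by
      show ψ 1 ∈ mR
      simpa [ψ] using hgmem
    rw [hbot, Submodule.mem_bot] at h1
    exact one_ne_zero h1
  -- J is an invertible fractional ideal of the Dedekind domain A
  let I : FractionalIdeal (nonZeroDivisors A) F := ⟨J, FractionalIdeal.isFractional_of_fg hJfg⟩
  have hIne : I ≠ 0 := by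
    intro h0
    exact hJne (FractionalIdeal.coeToSubmodule_eq_bot.mpr h0)
  have hcancel : I * I⁻¹ = 1 := mul_inv_cancel₀ hIne
  have h1F : (1 : F) ∈ J * ((1 : Submodule A F) / J) := by
    have hco : ((I * I⁻¹ : FractionalIdeal (nonZeroDivisors A) F) : Submodule A F)
        = J * ((1 : Submodule A F) / J) := by
      rw [FractionalIdeal.coe_mul, FractionalIdeal.coe_inv_of_ne_zero (K := F) hIne,
        IsLocalization.coeSubmodule_top]
      rfl
    have h1 : (1 : F) ∈ ((I * I⁻¹ : FractionalIdeal (nonZeroDivisors A) F) : Submodule A F) := by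
      rw [hcancel, FractionalIdeal.coe_one]
      exact Submodule.mem_one.mpr ⟨1, map_one _⟩
    rwa [hco] at h1
  -- transport back to K
  have key : ∀ z ∈ J * ((1 : Submodule A F) / J), φ z ∈ mR * (1 / mR) := by
    intro z hz
    refine Submodule.mul_induction_on hz ?_ ?_
    · intro p hp q hq
      have heq : φ (p * q) = (ψ p) * (g⁻¹ * φ q) := by
        simp only [ψ, LinearMap.coe_mk, AddHom.coe_mk, map_mul]
        field_simp
      rw [heq]
      refine mul_mem_mul hp ?_
      rw [Submodule.mem_div_iff_forall_mul_mem]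
      intro w hw
      obtain ⟨r, hr⟩ := hrange w hw
      have hrJ : r ∈ J := show ψ r ∈ mR from hr ▸ hw
      have hqr : q * r ∈ (1 : Submodule A F) := by
        rw [Submodule.mem_div_iff_forall_mul_mem] at hq
        exact hq r hrJ
      obtain ⟨a, ha⟩ := Submodule.mem_one.mp hqr
      have : g⁻¹ * φ q * w = φ (q * r) := by
        rw [← hr]
        simp only [ψ, LinearMap.coe_mk, AddHom.coe_mk, map_mul]
        field_simp
      rw [this, ← ha, AlgHom.commutes]
      exact Submodule.mem_one.mpr ⟨a, rfl⟩
    · intro p q hp hq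
      rw [map_add]
      exact Submodule.add_mem _ hp hq
  have := key 1 h1F
  rwa [map_one] at this

end Aux2

/-- If R = m_R·b_{R,0} ⊕ ⊕_{i≥1} A·b_{R,i} and S = m_S·b_{S,0} ⊕ ⊕_{i≥1} A·b_{S,i}
with span_K R = span_K S = V, then [R:S]'_A = m_S · m_R⁻¹ · (A · det_{B_S,B_R}(Id)). -/
theorem stmt_2 [IsDedekindDomain A] (hAK : Function.Injective (algebraMap A K))
    [FiniteDimensional K V] (n : ℕ) (bR bS : Module.Basis (Fin (n + 1)) K V)
    (mR mS : Submodule A K) (hmR : mR ≠ ⊥) (hmS : mS ≠ ⊥) (hmRfg : mR.FG) (hmSfg : mS.FG)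
    (R S : Submodule A V) (hR : IsLattice A K V R) (hS : IsLattice A K V S)
    (hRspan : span K (R : Set V) = ⊤) (hSspan : span K (S : Set V) = ⊤)
    (hRdef : R = ⨆ i : Fin (n + 1),
      ((if i = 0 then mR else 1).map ((LinearMap.toSpanSingleton K V (bR i)).restrictScalars A)))
    (hSdef : S = ⨆ i : Fin (n + 1),
      ((if i = 0 then mS else 1).map ((LinearMap.toSpanSingleton K V (bS i)).restrictScalars A))) :
    indexSet A K V R S = ↑(mS * (1 / mR) * span A {(bR.toMatrix ⇑bS).det}) := by
  classical
  have hdep := pairwise_dep hAK bR mR R hR.2 hRspan hRdef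
  have hone : (1 : K) ∈ mR * (1 / mR) := one_mem_mul_one_div hAK mR hmR hmRfg hdep
  set d : K := (bR.toMatrix ⇑bS).det with hd
  have hmemR : ∀ v : V, v ∈ R ↔ ∀ i, bR.repr v i ∈ (if i = 0 then mR else 1) := fun v => by
    rw [hRdef]; exact mem_lattice_iff bR _ v
  have hmemS : ∀ v : V, v ∈ S ↔ ∀ i, bS.repr v i ∈ (if i = 0 then mS else 1) := fun v => by
    rw [hSdef]; exact mem_lattice_iff bS _ v
  have hW : span K ((R : Set V) ∪ (S : Set V)) = ⊤ := by
    rw [eq_top_iff, ← hRspan]; exact span_mono Set.subset_union_left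
  set e := LinearEquiv.ofTop _ hW with he
  have hIdx : indexSet A K V R S
      = {t : K | ∃ u : V →ₗ[K] V, LinearMap.det u = t ∧ ∀ v ∈ R, u v ∈ S} := by
    ext t
    simp only [indexSet, Set.mem_setOf_eq]
    constructor
    · rintro ⟨u, hdet, hu⟩
      refine ⟨(e : _ →ₗ[K] V) ∘ₗ u ∘ₗ (e.symm : V →ₗ[K] _), ?_, ?_⟩
      · rw [LinearMap.det_conj]; exact hdet
      · intro v hv
        have h1 : ((e.symm v : _) : V) = v := by
          rw [he]; exact LinearEquiv.coe_ofTop_symm_apply _ v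
        have h2 : ((e.symm v : _) : V) ∈ R := by rw [h1]; exact hv
        have := hu (e.symm v) h2
        rw [he]
        simpa [LinearEquiv.ofTop_apply] using this
    · rintro ⟨u, hdet, hu⟩
      refine ⟨(e.symm : V →ₗ[K] _) ∘ₗ u ∘ₗ (e : _ →ₗ[K] V), ?_, ?_⟩
      · have hdc := LinearMap.det_conj u e.symm
        simp only [LinearEquiv.symm_symm] at hdc
        rw [hdc]
        exact hdet
      · intro z hz
        have h1 : (e z : V) = (z : V) := by
          rw [he]; exact LinearEquiv.ofTop_apply _ z
        have := hu (z : V) hz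
        simp only [LinearMap.coe_comp, Function.comp_apply, LinearEquiv.coe_coe, h1]
        rw [he, LinearEquiv.coe_ofTop_symm_apply]
        exact this
  rw [hIdx]
  ext t
  simp only [Set.mem_setOf_eq, SetLike.mem_coe]
  constructor
  · rintro ⟨u, rfl, hu⟩
    set C := LinearMap.toMatrix bR bS u with hC
    have hbmemR : ∀ (j) (c : K), c ∈ (if j = 0 then mR else (1 : Submodule A K)) →
        c • bR j ∈ R := by
      intro j c hc
      rw [hRdef]
      exact le_iSup (fun i => Submodule.map ((LinearMap.toSpanSingleton K V (bR i)).restrictScalars A)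
        (if i = 0 then mR else 1)) j ⟨c, hc, rfl⟩
    have hdetu : LinearMap.det u = d * C.det := by
      have h1 : LinearMap.toMatrix bR bR u = (bR.toMatrix ⇑bS) * C := by
        have h2 := LinearMap.toMatrix_comp bR bS bR LinearMap.id u
        rw [LinearMap.id_comp, LinearMap.toMatrix_id_eq_basis_toMatrix] at h2
        rw [hC]
        exact h2
      calc LinearMap.det u = (LinearMap.toMatrix bR bR u).det :=
            (LinearMap.det_toMatrix bR u).symm
        _ = d * C.det := by rw [h1, Matrix.det_mul, hd]
    have hCmem : ∀ i j, C i j ∈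
        (if i = 0 then mS else (1 : Submodule A K)) *
          (if j = 0 then 1 / mR else (1 : Submodule A K)) := by
      intro i j
      have hCij : ∀ c : K, c * C i j = bS.repr (u (c • bR j)) i := by
        intro c
        rw [hC, LinearMap.toMatrix_apply, map_smul, map_smul, Finsupp.smul_apply, smul_eq_mul]
      by_cases hj : j = 0
      · subst hj
        have hmul : ∀ c ∈ mR, c * C i 0 ∈ (if i = 0 then mS else (1 : Submodule A K)) := by
          intro c hc
          have hmem : (c • bR 0 : V) ∈ R := hbmemR 0 c (by simpa using hc)
          have hus := (hmemS _).mp (hu _ hmem) i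
          rwa [← hCij c] at hus
        rw [if_pos rfl]
        by_cases hi : i = 0
        · subst hi
          rw [if_pos rfl] at hmul ⊢
          exact mem_mul_div_of hone hmul
        · rw [if_neg hi] at hmul ⊢
          rw [one_mul]
          rw [Submodule.mem_div_iff_forall_mul_mem]
          intro c hc
          rw [mul_comm]
          exact hmul c hc
      · have hmem : (bR j : V) ∈ R := by
          have := hbmemR j 1 (by rw [if_neg hj]; exact Submodule.mem_one.mpr ⟨1, map_one _⟩)
          simpa using this
        have hus := (hmemS _).mp (hu _ hmem) i
        have h1 : C i j = bS.repr (u (bR j)) i := by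
          have := hCij 1
          simpa using this
        rw [if_neg hj, mul_one, h1]
        exact hus
    have hCdet : C.det ∈ mS * (1 / mR) := by
      rw [Matrix.det_apply]
      refine Submodule.sum_mem _ fun σ _ => ?_
      have hprod : (∏ j, C (σ j) j) ∈ mS * (1 / mR) := by
        have hp := prod_mem_prod' Finset.univ
          (fun j => (if σ j = 0 then mS else (1 : Submodule A K)) *
            (if j = 0 then 1 / mR else (1 : Submodule A K)))
          (fun j => C (σ j) j) (fun j _ => hCmem (σ j) j)
        have heq : (∏ j, ((if σ j = 0 then mS else (1 : Submodule A K)) *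
            (if j = 0 then 1 / mR else (1 : Submodule A K)))) = mS * (1 / mR) := by
          rw [Finset.prod_mul_distrib]
          congr 1
          · rw [Equiv.prod_comp σ (fun i => if i = 0 then mS else (1 : Submodule A K))]
            simp [Finset.prod_ite_eq']
          · simp [Finset.prod_ite_eq']
        rwa [heq] at hp
      rcases Int.units_eq_one_or (Equiv.Perm.sign σ) with h | h <;> rw [h]
      · simpa using hprod
      · simpa using Submodule.neg_mem _ hprod
    rw [hdetu]
    have hfin : d * C.det ∈ span A {d} * (mS * (1 / mR)) :=
      mul_mem_mul (Submodule.mem_span_singleton_self d) hCdet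
    rwa [mul_comm] at hfin
  · intro ht
    rw [mul_comm] at ht
    obtain ⟨y, hy, hyd⟩ := Submodule.mem_span_singleton_mul.mp ht
    set Dg : Matrix (Fin (n+1)) (Fin (n+1)) K :=
      Matrix.diagonal (fun i => if i = 0 then y else 1) with hDg
    refine ⟨Matrix.toLin bR bS Dg, ?_, ?_⟩
    · have h1 : LinearMap.toMatrix bR bR (Matrix.toLin bR bS Dg) = (bR.toMatrix ⇑bS) * Dg := by
        have h2 := LinearMap.toMatrix_comp bR bS bR LinearMap.id (Matrix.toLin bR bS Dg)
        rw [LinearMap.id_comp, LinearMap.toMatrix_id_eq_basis_toMatrix,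
          LinearMap.toMatrix_toLin] at h2
        exact h2
      have h2 : Dg.det = y := by
        rw [hDg, Matrix.det_diagonal]
        simp [Finset.prod_ite_eq']
      calc LinearMap.det (Matrix.toLin bR bS Dg)
          = (LinearMap.toMatrix bR bR (Matrix.toLin bR bS Dg)).det :=
            (LinearMap.det_toMatrix bR _).symm
        _ = d * y := by rw [h1, Matrix.det_mul, h2, hd]
        _ = t := hyd
    · intro v hv
      rw [hmemS]
      intro i
      have hrep := LinearMap.toMatrix_mulVec_repr bR bS (Matrix.toLin bR bS Dg) v
      rw [LinearMap.toMatrix_toLin] at hrep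
      have hi := congrFun hrep i
      rw [hDg, Matrix.mulVec_diagonal] at hi
      rw [← hi]
      have hvi := (hmemR v).mp hv i
      by_cases hi0 : i = 0
      · subst hi0
        rw [if_pos rfl] at hvi ⊢
        rw [if_pos rfl]
        exact mul_mem_of_mem_mul_div hy _ hvi
      · rw [if_neg hi0] at hvi ⊢
        rw [if_neg hi0, one_mul]
        exact hvi
end

section
/- Let K be a field, A ⊆ K a Dedekind domain, V a K-vector space, and R, S A-lattices with R ≠ 0 and span_K(R) = span_K(S) = V'. If v is a K-linear automorphism of V' with v(R) = S, then [R:S]'_A = A·det(v). -/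
open Submodule

variable (A K V : Type*) [CommRing A] [Field K] [Algebra A K]
  [AddCommGroup V] [Module K V] [Module A V] [IsScalarTower A K V]

section Helpers

open scoped nonZeroDivisors

variable {A K} {W : Type*} [AddCommGroup W] [Module K W] [Module A W] [IsScalarTower A K W]

theorem setup_lemma [IsDomain A] [IsNoetherianRing A]
    (hAK : Function.Injective (algebraMap A K))
    (M : Submodule A W) (hfg : M.FG) (hsp : span K (M : Set W) = ⊤)
    (hrank : Module.rank A M = Module.rank K W) [FiniteDimensional K W] :
    ∃ (s : Set W) (_ : Fintype ↥s) (e : Module.Basis ↥s K W) (d : A), d ≠ 0 ∧ (∀ i, e i ∈ M) ∧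
      (∀ x ∈ M, ∀ i, ∃ b : A, algebraMap A K b = e.repr (d • x) i) := by
  classical
  obtain ⟨b, hbM, hbsp, hbli⟩ := exists_linearIndependent K (M : Set W)
  rw [hsp] at hbsp
  have hfin : b.Finite := hbli.setFinite
  haveI := hfin.fintype
  let e : Module.Basis b K W := Module.Basis.mk hbli (by rw [Subtype.range_coe]; exact hbsp.ge)
  have heM : ∀ i, e i ∈ M := fun i => hbM (by simp [e])
  have heliA : LinearIndependent A (fun i : b => e i) :=
    (e.linearIndependent).restrict_scalars (by
      intro x y h
      apply hAK
      simpa [Algebra.algebraMap_eq_smul_one] using h)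
  have hcard : Module.finrank A M = Fintype.card b := by
    have h1 : Module.rank K W = Fintype.card b := by
      rw [← Module.finrank_eq_rank, Module.finrank_eq_card_basis e]
    have : Module.rank A M = Fintype.card b := by rw [hrank, h1]
    simpa [Module.finrank] using congrArg Cardinal.toNat this
  haveI : Module.Finite A M := Module.Finite.iff_fg.mpr (by simpa using hfg)
  -- common denominator for a single element
  have hden : ∀ x ∈ M, ∃ d : A, d ≠ 0 ∧ d • x ∈ span A b := by
    intro x hx
    by_contra hcon
    push_neg at hcon
    set v : Option b → M := fun o => o.elim ⟨x, hx⟩ (fun i => ⟨e i, heM i⟩) with hv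
    have hli : LinearIndependent A v := by
      rw [Fintype.linearIndependent_iff]
      intro g hg
      have hg' : g none • x + ∑ i : b, g (some i) • (e i : W) = 0 := by
        have := congrArg (Submodule.subtype M) hg
        simpa [v, Fintype.sum_option] using this
      by_cases h0 : g none = 0
      · have hsum : ∑ i : b, g (some i) • (e i : W) = 0 := by
          simpa [h0] using hg'
        have := linearIndependent_iff'.mp heliA Finset.univ (fun i => g (some i)) hsum
        intro o
        rcases o with _ | i
        · exact h0
        · exact this i (Finset.mem_univ i)
      · exfalso
        apply hcon (g none) h0
        have hmx : g none • x = -∑ i : b, g (some i) • (e i : W) :=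
          eq_neg_of_add_eq_zero_left hg'
        rw [hmx]
        exact neg_mem (sum_mem fun i _ => smul_mem _ _ (subset_span (show (e i : W) ∈ b by simp [e])))
    have := hli.fintype_card_le_finrank
    rw [hcard, Fintype.card_option] at this
    omega
  -- global denominator via finite generating set
  obtain ⟨T, hT⟩ := hfg
  choose dfun hd0 hdmem using fun (x : T) => hden x (hT ▸ subset_span x.2)
  haveI : Fintype T := FinsetCoe.fintype T
  refine ⟨b, inferInstance, e, ∏ x : T, dfun x, ?_, heM, ?_⟩
  · exact Finset.prod_ne_zero_iff.2 (fun x _ => hd0 x)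
  · -- first: (∏ d) • x ∈ span A b for x in M
    have key : ∀ x ∈ M, (∏ x : T, dfun x) • x ∈ span A b := by
      intro x hx
      rw [← hT] at hx
      induction hx using span_induction with
      | mem y hy =>
          have : (∏ x : T, dfun x) = (∏ x ∈ Finset.univ.erase ⟨y, hy⟩, dfun x) * dfun ⟨y, hy⟩ := by
            rw [Finset.prod_erase_mul _ _ (Finset.mem_univ _)]
          rw [this, mul_smul]
          exact smul_mem _ _ (hdmem ⟨y, hy⟩)
      | zero => simp
      | add y z _ _ hy hz => rw [smul_add]; exact add_mem hy hz
      | smul a y _ hy => rw [smul_comm]; exact smul_mem _ _ hy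
    -- coordinates of elements of span A b are in the image of A
    have coords : ∀ y ∈ span A b, ∀ i : b, ∃ c : A, algebraMap A K c = e.repr y i := by
      intro y hy
      induction hy using span_induction with
      | mem z hz =>
          intro i
          have hz' : z = e ⟨z, hz⟩ := by simp [e]
          by_cases hzi : (⟨z, hz⟩ : b) = i
          · refine ⟨1, ?_⟩
            rw [map_one, hz', e.repr_self, hzi, Finsupp.single_eq_same]
          · refine ⟨0, ?_⟩
            rw [map_zero, hz', e.repr_self]
            exact (Finsupp.single_eq_of_ne (Ne.symm hzi)).symm
      | zero => intro i; exact ⟨0, by simp⟩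
      | add y z _ _ hy hz =>
          intro i
          obtain ⟨c1, hc1⟩ := hy i; obtain ⟨c2, hc2⟩ := hz i
          exact ⟨c1 + c2, by rw [map_add, hc1, hc2, map_add]; simp⟩
      | smul a y _ hy =>
          intro i
          obtain ⟨c, hc⟩ := hy i
          refine ⟨a * c, ?_⟩
          rw [map_mul, hc]
          have : e.repr (a • y) = a • e.repr y := by
            rw [← algebraMap_smul K a y, map_smul, algebraMap_smul]
          rw [this]
          simp [Algebra.smul_def]
    intro x hx i
    exact coords _ (key x hx) i


theorem detH1 [IsDedekindDomain A] (hAK : Function.Injective (algebraMap A K))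
    (M : Submodule A W) (hfg : M.FG) (hsp : span K (M : Set W) = ⊤)
    (hrank : Module.rank A M = Module.rank K W) [FiniteDimensional K W]
    (w : W →ₗ[K] W) (hw : ∀ x ∈ M, w x ∈ M) :
    ∃ a : A, algebraMap A K a = LinearMap.det w := by
  classical
  obtain ⟨s, hsfin, e, d, hd0, heM, hcoord⟩ :
      ∃ (s : Set W) (_ : Fintype ↥s) (e : Module.Basis ↥s K W) (d : A), d ≠ 0 ∧ (∀ i, e i ∈ M) ∧
      (∀ x ∈ M, ∀ i, ∃ b : A, algebraMap A K b = e.repr (d • x) i) := setup_lemma hAK M hfg hsp hrank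
  set n := Fintype.card ↥s with hn
  set dK := algebraMap A K d with hdK
  have hdK0 : dK ≠ 0 := fun h => hd0 (hAK (by rwa [map_zero]))
  set dKn := dK ^ n with hdKn
  have hdKn0 : dKn ≠ 0 := pow_ne_zero _ hdK0
  -- matrix claim
  have hMat : ∀ u : W →ₗ[K] W, (∀ x ∈ M, u x ∈ M) →
      ∃ c : A, algebraMap A K c = dKn * LinearMap.det u := by
    intro u hu
    have entry : ∀ i j, ∃ b : A, algebraMap A K b = dK * (LinearMap.toMatrix e e u) i j := by
      intro i j
      obtain ⟨b, hb⟩ := hcoord (u (e j)) (hu _ (heM j)) i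
      refine ⟨b, ?_⟩
      rw [hb, ← algebraMap_smul K d (u (e j)), map_smul]
      simp [LinearMap.toMatrix_apply, Algebra.smul_def, hdK]
    choose B hB using entry
    refine ⟨(Matrix.of B).det, ?_⟩
    have : (Matrix.of B).map (algebraMap A K) = dK • LinearMap.toMatrix e e u := by
      ext i j
      simp [Matrix.map_apply, hB i j]
    rw [RingHom.map_det]
    show ((Matrix.of B).map (algebraMap A K)).det = _
    rw [this, Matrix.det_smul, LinearMap.det_toMatrix]
  -- powers preserve M
  have hpowM : ∀ k : ℕ, ∀ x ∈ M, (w ^ k) x ∈ M := by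
    intro k
    induction k with
    | zero => intro x hx; simpa using hx
    | succ k ih =>
        intro x hx
        rw [pow_succ']
        exact hw _ (ih x hx)
  set t := LinearMap.det w with ht
  have hpow : ∀ k : ℕ, ∃ c : A, algebraMap A K c = dKn * t ^ k := by
    intro k
    obtain ⟨c, hc⟩ := hMat (w ^ k) (hpowM k)
    exact ⟨c, by rw [hc, ht, ← map_pow]⟩
  -- adjoin A {t} is contained in span A {dKn⁻¹}
  set N : Submodule A K := span A {dKn⁻¹} with hN
  have htk : ∀ k : ℕ, t ^ k ∈ N := by
    intro k
    obtain ⟨c, hc⟩ := hpow k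
    rw [mem_span_singleton]
    exact ⟨c, by rw [Algebra.smul_def, hc]; field_simp⟩
  have hTN : Subalgebra.toSubmodule (Algebra.adjoin A {t}) ≤ N := by
    intro z hz
    rw [Subalgebra.mem_toSubmodule, Algebra.adjoin_singleton_eq_range_aeval,
      AlgHom.mem_range] at hz
    obtain ⟨p, hp⟩ := hz
    rw [← hp, Polynomial.aeval_eq_sum_range]
    exact sum_mem fun k _ => smul_mem _ _ (htk k)
  have hNfg : N.FG := fg_span_singleton _
  haveI : IsNoetherian A N := isNoetherian_of_fg_of_noetherian N hNfg
  have hTfg : (Subalgebra.toSubmodule (Algebra.adjoin A {t})).FG := by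
    have h1 : map N.subtype (comap N.subtype (Subalgebra.toSubmodule (Algebra.adjoin A {t})))
        = Subalgebra.toSubmodule (Algebra.adjoin A {t}) := by
      rw [Submodule.map_comap_subtype, inf_eq_right.2 hTN]
    rw [← h1]
    exact Submodule.FG.map _ (IsNoetherian.noetherian _)
  have hint : IsIntegral A t :=
    IsIntegral.of_mem_of_fg _ hTfg _ (Algebra.self_mem_adjoin_singleton A t)
  -- transfer to fraction field
  obtain ⟨c₁, hc₁⟩ := hpow 1
  set F := FractionRing A
  have hinj : Function.Injective (Algebra.ofId A K) := hAK
  set φ : F →ₐ[A] K := IsFractionRing.liftAlgHom (g := Algebra.ofId A K) hinj with hφ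
  have hφinj : Function.Injective φ := φ.toRingHom.injective
  set τ : F := algebraMap A F c₁ / algebraMap A F (d ^ n) with hτ
  have hφτ : φ τ = t := by
    rw [hτ, map_div₀, φ.commutes, φ.commutes]
    have h1 : (algebraMap A K c₁ : K) = dKn * t ^ 1 := hc₁
    have h2 : (algebraMap A K (d ^ n) : K) = dKn := by rw [map_pow, ← hdK, hdKn]
    show (Algebra.ofId A K) c₁ / (Algebra.ofId A K) (d ^ n) = t
    show algebraMap A K c₁ / algebraMap A K (d ^ n) = t
    rw [h1, h2, pow_one]
    field_simp
  have hintτ : IsIntegral A τ := by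
    obtain ⟨p, hmonic, hp⟩ := hint
    refine ⟨p, hmonic, ?_⟩
    apply hφinj
    rw [map_zero]
    have h := Polynomial.aeval_algHom_apply φ τ p
    simp only [Polynomial.aeval_def] at h
    rw [← h, hφτ]
    exact hp
  obtain ⟨y, hy⟩ := IsIntegrallyClosed.isIntegral_iff.mp hintτ
  exact ⟨y, by rw [← hφτ, ← hy, φ.commutes]⟩


theorem detH2 [IsDedekindDomain A] (hAK : Function.Injective (algebraMap A K))
    (M : Submodule A W) (hfg : M.FG) (hsp : span K (M : Set W) = ⊤)
    (hrank : Module.rank A M = Module.rank K W) [FiniteDimensional K W]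
    (hM0 : M ≠ ⊥) (a : A) :
    ∃ w : W →ₗ[K] W, (∀ x ∈ M, w x ∈ M) ∧ LinearMap.det w = algebraMap A K a := by
  classical
  obtain ⟨s, hsfin, e, d, hd0, heM, hcoord⟩ :
      ∃ (s : Set W) (_ : Fintype ↥s) (e : Module.Basis ↥s K W) (d : A), d ≠ 0 ∧ (∀ i, e i ∈ M) ∧
      (∀ x ∈ M, ∀ i, ∃ b : A, algebraMap A K b = e.repr (d • x) i) := setup_lemma hAK M hfg hsp hrank
  have hsne : Nonempty ↥s := by
    by_contra h
    haveI : IsEmpty ↥s := not_nonempty_iff.mp h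
    apply hM0
    rw [eq_bot_iff]
    intro x hx
    have : Subsingleton W := e.repr.toEquiv.subsingleton
    simp [Subsingleton.elim x 0]
  obtain ⟨i0⟩ := hsne
  set lam : W →ₗ[K] K := e.coord i0 with hlam
  have hlame : lam (e i0) = 1 := by simp [hlam]
  set mu : W →ₗ[A] K := lam.restrictScalars A with hmu
  set JK : Submodule A K := Submodule.map mu M with hJK
  set I : Ideal A := Submodule.comap (Algebra.linearMap A K) (Submodule.map (d • mu) M) with hI
  have hImem : ∀ b : A, b ∈ I ↔ algebraMap A K b ∈ Submodule.map (d • mu) M := fun b => Iff.rfl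
  have hsurj : ∀ z ∈ Submodule.map (d • mu) M, ∃ b ∈ I, algebraMap A K b = z := by
    rintro z ⟨x, hx, rfl⟩
    obtain ⟨b, hb⟩ := hcoord x hx i0
    have : (d • mu) x = algebraMap A K b := by
      rw [hb]
      show d • mu x = e.repr (d • x) i0
      rw [← map_smul mu d x]
      rfl
    exact ⟨b, by rw [hImem, ← this]; exact mem_map_of_mem hx, this.symm⟩
  have hdI : d ∈ I := by
    rw [hImem]
    refine ⟨e i0, heM i0, ?_⟩
    show d • lam (e i0) = algebraMap A K d
    rw [hlame, Algebra.smul_def, mul_one]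
  have hI0 : I ≠ ⊥ := fun h => hd0 (by rwa [h, Submodule.mem_bot] at hdI)
  set F := FractionRing A
  have hIc0 : (I : FractionalIdeal A⁰ F) ≠ 0 := FractionalIdeal.coeIdeal_ne_zero.mpr hI0
  have hone : (1 : F) ∈ ((I : FractionalIdeal A⁰ F) * (I : FractionalIdeal A⁰ F)⁻¹) := by
    rw [mul_inv_cancel₀ hIc0]
    exact (FractionalIdeal.mem_one_iff _).mpr ⟨1, map_one _⟩
  have h1 : (1 : F) ∈ ((I : FractionalIdeal A⁰ F) : Submodule A F) *
      (((I : FractionalIdeal A⁰ F)⁻¹ : FractionalIdeal A⁰ F) : Submodule A F) := by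
    rw [← FractionalIdeal.coe_mul]
    exact hone
  have hinj : Function.Injective (Algebra.ofId A K) := hAK
  set φ : F →ₐ[A] K := IsFractionRing.liftAlgHom (g := Algebra.ofId A K) hinj with hφ
  have hφalg : ∀ c : A, φ (algebraMap A F c) = algebraMap A K c := fun c => φ.commutes c
  -- main induction
  have hQ : ∀ z ∈ (((I : FractionalIdeal A⁰ F) : Submodule A F) *
      (((I : FractionalIdeal A⁰ F)⁻¹ : FractionalIdeal A⁰ F) : Submodule A F)),
      ∃ sl : K →ₗ[K] W, (∀ y ∈ JK, sl y ∈ M) ∧ ∀ y : K, lam (sl y) = φ z * y := by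
    intro z hz
    refine Submodule.mul_induction_on hz ?_ ?_
    · intro x hx y hy
      rw [FractionalIdeal.mem_coe, FractionalIdeal.mem_coeIdeal _] at hx
      obtain ⟨b, hbI, rfl⟩ := hx
      rw [FractionalIdeal.mem_coe] at hy
      obtain ⟨r, hrM, hrb⟩ := (hImem b).mp hbI
      -- hrb : (d • mu) r = algebraMap A K b
      refine ⟨(φ y * algebraMap A K d) • LinearMap.toSpanSingleton K W r, ?_, ?_⟩
      · intro t ht
        have htd : ∃ b' ∈ I, algebraMap A K b' = algebraMap A K d * t := by
          obtain ⟨x', hx', rfl⟩ := ht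
          refine hsurj _ ⟨x', hx', ?_⟩
          show d • mu x' = algebraMap A K d * mu x'
          rw [Algebra.smul_def]
        obtain ⟨b', hb'I, hb'⟩ := htd
        have hy1 : y * algebraMap A F b' ∈ (1 : FractionalIdeal A⁰ F) :=
          (FractionalIdeal.mem_inv_iff hIc0).mp hy _
            ((FractionalIdeal.mem_coeIdeal _).mpr ⟨b', hb'I, rfl⟩)
        obtain ⟨c', hc'⟩ := (FractionalIdeal.mem_one_iff _).mp hy1
        have hcoef : (φ y * algebraMap A K d) • (t • r) = c' • r := by
          rw [smul_smul, ← algebraMap_smul K c' r]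
          congr 1
          calc φ y * algebraMap A K d * t = φ y * algebraMap A K b' := by rw [hb']; ring
            _ = φ (y * algebraMap A F b') := by rw [map_mul, hφalg]
            _ = algebraMap A K c' := by rw [← hc', hφalg]
        show (φ y * algebraMap A K d) • (t • r) ∈ M
        rw [hcoef]
        exact smul_mem _ _ hrM
      · intro t
        show lam ((φ y * algebraMap A K d) • (t • r)) = φ (algebraMap A F b * y) * t
        rw [map_smul, map_smul, map_mul, hφalg]
        have : algebraMap A K d * lam r = algebraMap A K b := by
          rw [← hrb]; exact (Algebra.smul_def d (lam r)).symm
        rw [smul_eq_mul, smul_eq_mul]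
        calc φ y * algebraMap A K d * (t * lam r)
            = φ y * (algebraMap A K d * lam r) * t := by ring
          _ = algebraMap A K b * φ y * t := by rw [this]; ring
    · intro x y ihx ihy
      obtain ⟨s1, hs1M, hs1⟩ := ihx
      obtain ⟨s2, hs2M, hs2⟩ := ihy
      refine ⟨s1 + s2, fun y hy => add_mem (hs1M y hy) (hs2M y hy), fun t => ?_⟩
      rw [LinearMap.add_apply, map_add, hs1, hs2, map_add, add_mul]
  obtain ⟨sl, hslM, hsl⟩ := hQ 1 h1
  rw [map_one] at hsl
  simp only [one_mul] at hsl
  -- the endomorphism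
  set aK := algebraMap A K a with haK
  set w : W →ₗ[K] W := LinearMap.id + (aK - 1) • (sl ∘ₗ lam) with hw
  refine ⟨w, ?_, ?_⟩
  · intro x hx
    have h1' : lam x ∈ JK := ⟨x, hx, rfl⟩
    have h2' : (aK - 1) * lam x ∈ JK := by
      have haimg : aK * lam x ∈ JK := by
        rw [← Algebra.smul_def]
        exact smul_mem _ _ h1'
      rw [sub_mul, one_mul]
      exact sub_mem haimg h1'
    have : w x = x + sl ((aK - 1) * lam x) := by
      rw [hw]
      simp only [LinearMap.add_apply, LinearMap.id_apply, LinearMap.smul_apply,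
        LinearMap.comp_apply]
      rw [← smul_eq_mul, map_smul]
    rw [this]
    exact add_mem hx (hslM _ h2')
  · -- determinant
    have hsl1 : ∀ y : K, sl y = y • sl 1 := by
      intro y
      conv_rhs => rw [← map_smul]
      simp
    have hlamsl1 : lam (sl 1) = 1 := hsl 1
    set u0 : ↥s → K := fun i => e.repr (sl 1) i with hu0
    set v0 : ↥s → K := fun j => (aK - 1) * lam (e j) with hv0
    have hmat : LinearMap.toMatrix e e w = 1 + Matrix.replicateCol Unit u0 * Matrix.replicateRow Unit v0 := by
      ext i j
      rw [LinearMap.toMatrix_apply]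
      have hwj : w (e j) = e j + ((aK - 1) * lam (e j)) • sl 1 := by
        rw [hw]
        simp only [LinearMap.add_apply, LinearMap.id_apply, LinearMap.smul_apply,
          LinearMap.comp_apply]
        rw [hsl1 (lam (e j)), smul_smul]
      have hRHS : ((1 + Matrix.replicateCol Unit u0 * Matrix.replicateRow Unit v0 : Matrix ↥s ↥s K)) i j
          = (if i = j then 1 else 0) + u0 i * v0 j := by
        simp [Matrix.add_apply, Matrix.one_apply, Matrix.mul_apply, Matrix.replicateCol_apply,
          Matrix.replicateRow_apply]
      rw [hRHS, hwj, map_add, map_smul, Finsupp.add_apply, Finsupp.smul_apply]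
      rw [e.repr_self, Finsupp.single_apply, smul_eq_mul]
      congr 1
      · by_cases h : i = j
        · simp [h]
        · rw [if_neg (fun hji => h hji.symm), if_neg h]
      · simp only [hu0, hv0]; ring
    have := LinearMap.det_toMatrix e w
    rw [hmat, Matrix.det_one_add_replicateCol_mul_replicateRow] at this
    rw [← this]
    have hdot : dotProduct v0 u0 = (aK - 1) * lam (sl 1) := by
      have hexp : lam (sl 1) = ∑ j : ↥s, e.repr (sl 1) j * lam (e j) := by
        conv_lhs => rw [← e.sum_repr (sl 1)]
        rw [map_sum]
        exact Finset.sum_congr rfl fun j _ => by rw [map_smul, smul_eq_mul]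
      show ∑ j : ↥s, v0 j * u0 j = _
      rw [hexp, Finset.mul_sum]
      exact Finset.sum_congr rfl fun j _ => by simp only [hu0, hv0]; ring
    rw [hdot, hlamsl1]
    ring

theorem main_abs [IsDedekindDomain A] (hAK : Function.Injective (algebraMap A K))
    (M N : Submodule A W) (hfg : M.FG) (hsp : span K (M : Set W) = ⊤)
    (hrank : Module.rank A M = Module.rank K W) [FiniteDimensional K W] (hM0 : M ≠ ⊥)
    (v : W ≃ₗ[K] W) (hv : Submodule.map (v.toLinearMap.restrictScalars A) M = N) :
    {z : K | ∃ u : W →ₗ[K] W, LinearMap.det u = z ∧ ∀ x : W, x ∈ M → u x ∈ N}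
      = ↑(span A {LinearMap.det v.toLinearMap}) := by
  apply Set.eq_of_subset_of_subset
  · rintro z ⟨u, hdet, hu⟩
    set w : W →ₗ[K] W := v.symm.toLinearMap ∘ₗ u with hw
    have hwM : ∀ x ∈ M, w x ∈ M := by
      intro x hx
      have h1 : u x ∈ Submodule.map (v.toLinearMap.restrictScalars A) M := hv ▸ hu x hx
      obtain ⟨y, hy, hyx⟩ := h1
      have h2 : v.symm (u x) = y := by
        have : v y = u x := hyx
        rw [← this, v.symm_apply_apply]
      show v.symm (u x) ∈ M
      rw [h2]; exact hy
    obtain ⟨a, ha⟩ := detH1 hAK M hfg hsp hrank w hwM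
    have hcomp : u = v.toLinearMap ∘ₗ w := by
      ext x
      show u x = v (v.symm (u x))
      rw [v.apply_symm_apply]
    rw [SetLike.mem_coe, mem_span_singleton]
    refine ⟨a, ?_⟩
    rw [Algebra.smul_def, ha, ← hdet, hcomp, hw]
    simp only [LinearMap.det_comp]
    ring
  · intro z hz
    rw [SetLike.mem_coe, mem_span_singleton] at hz
    obtain ⟨a, ha⟩ := hz
    obtain ⟨w, hwM, hdetw⟩ := detH2 hAK M hfg hsp hrank hM0 a
    refine ⟨v.toLinearMap ∘ₗ w, ?_, fun x hx => ?_⟩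
    · rw [LinearMap.det_comp, hdetw, ← ha, Algebra.smul_def]
      ring
    · show v (w x) ∈ N
      rw [← hv]
      exact ⟨w x, hwM x hx, rfl⟩

end Helpers

/-- If a K-automorphism v of V' maps R onto S (spans being equal), then
[R:S]'_A = A·det(v). -/
theorem stmt_5 [IsDedekindDomain A] (hAK : Function.Injective (algebraMap A K))
    (R S : Submodule A V) (hR : IsLattice A K V R) (hS : IsLattice A K V S)
    (hR0 : R ≠ ⊥) (hspan : span K (R : Set V) = span K (S : Set V))
    (v : (span K ((R : Set V) ∪ (S : Set V))) ≃ₗ[K]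
        (span K ((R : Set V) ∪ (S : Set V))))
    (hv : Submodule.map (v.toLinearMap.restrictScalars A)
        (Submodule.comap (((span K ((R : Set V) ∪ (S : Set V))).subtype).restrictScalars A) R)
      = Submodule.comap (((span K ((R : Set V) ∪ (S : Set V))).subtype).restrictScalars A) S) :
    indexSet A K V R S = ↑(span A {LinearMap.det v.toLinearMap}) := by
  classical
  have hVeq : span K ((R : Set V) ∪ (S : Set V)) = span K (R : Set V) := by
    rw [span_union, hspan, sup_idem]
  have hRle : (R : Set V) ⊆ ((span K ((R : Set V) ∪ (S : Set V)) : Submodule K V) : Set V) :=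
    fun x hx => subset_span (Or.inl hx)
  have hfinj : Function.Injective
      (((span K ((R : Set V) ∪ (S : Set V))).subtype).restrictScalars A) :=
    Subtype.val_injective
  have hmapR : Submodule.map (((span K ((R : Set V) ∪ (S : Set V))).subtype).restrictScalars A)
      (Submodule.comap (((span K ((R : Set V) ∪ (S : Set V))).subtype).restrictScalars A) R)
      = R := by
    rw [Submodule.map_comap_eq, inf_eq_right]
    intro x hx
    exact ⟨⟨x, hRle hx⟩, rfl⟩
  haveI : Module.Finite A ↥R := Module.Finite.iff_fg.mpr hR.1
  let eqv := (Submodule.equivMapOfInjective _ hfinj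
    (Submodule.comap (((span K ((R : Set V) ∪ (S : Set V))).subtype).restrictScalars A) R)).trans
    (LinearEquiv.ofEq _ _ hmapR)
  haveI : Module.Finite A
      ↥(Submodule.comap (((span K ((R : Set V) ∪ (S : Set V))).subtype).restrictScalars A) R) :=
    Module.Finite.equiv eqv.symm
  have hfg : (Submodule.comap
      (((span K ((R : Set V) ∪ (S : Set V))).subtype).restrictScalars A) R).FG :=
    Module.Finite.iff_fg.mp inferInstance
  have hrank : Module.rank A
      ↥(Submodule.comap (((span K ((R : Set V) ∪ (S : Set V))).subtype).restrictScalars A) R)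
      = Module.rank K ↥(span K ((R : Set V) ∪ (S : Set V))) := by
    rw [eqv.rank_eq, hR.2, ← (LinearEquiv.ofEq _ _ hVeq).rank_eq]
  haveI : FiniteDimensional K ↥(span K ((R : Set V) ∪ (S : Set V))) := by
    have : Module.rank K ↥(span K ((R : Set V) ∪ (S : Set V))) < Cardinal.aleph0 := by
      rw [← hrank]
      exact Module.rank_lt_aleph0 A _
    exact Module.rank_lt_aleph0_iff.mp this
  have hsp : span K ((Submodule.comap
      (((span K ((R : Set V) ∪ (S : Set V))).subtype).restrictScalars A) R :
        Submodule A ↥(span K ((R : Set V) ∪ (S : Set V)))) :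
      Set ↥(span K ((R : Set V) ∪ (S : Set V)))) = ⊤ := by
    apply Submodule.map_injective_of_injective
      (Submodule.injective_subtype (span K ((R : Set V) ∪ (S : Set V))))
    rw [Submodule.map_span, Submodule.map_subtype_top]
    have himg : (span K ((R : Set V) ∪ (S : Set V))).subtype '' (Submodule.comap
        (((span K ((R : Set V) ∪ (S : Set V))).subtype).restrictScalars A) R : Set _)
        = (R : Set V) := by
      ext y
      constructor
      · rintro ⟨x, hx, rfl⟩; exact hx
      · intro hy; exact ⟨⟨y, hRle hy⟩, hy, rfl⟩
    rw [himg, ← hVeq]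
  have hR0' : Submodule.comap
      (((span K ((R : Set V) ∪ (S : Set V))).subtype).restrictScalars A) R ≠ ⊥ := by
    intro hbot
    apply hR0
    rw [← hmapR, hbot, Submodule.map_bot]
  exact main_abs hAK _ _ hfg hsp hrank hR0' v hv
end

section
/- Let S be a multiplicative subset of ℤ not containing 0, A = S^{-1}ℤ, and let N ⊆ M be A-lattices of a ℚ-vector space V (or K-vector space with A ⊆ K) with M ≠ 0 and rank_A(M) = rank_A(N). Then [M:N]'_A = [M:N]·A, where [M:N] is the cardinality of M/N. -/
open Submodule

variable (A K V : Type*) [CommRing A] [Field K] [Algebra A K]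
  [AddCommGroup V] [Module K V] [Module A V] [IsScalarTower A K V]

section Arithmetic

variable (S : Submonoid ℤ)
local notation "φ" => algebraMap ℤ (Localization S)

theorem unit_of_dvd_S {s : ℤ} (hs : s ∈ S) {t : ℤ} (ht : t ∣ s) : IsUnit (φ t) := by
  obtain ⟨c, rfl⟩ := ht
  exact isUnit_of_mul_isUnit_left (by rw [← map_mul]; exact IsLocalization.map_units _ ⟨_, hs⟩)


theorem reduce (r : ℤ) (hr : r ≠ 0) : ∃ v : ℤ, v ≠ 0 ∧
    Ideal.span {φ v} = Ideal.span {φ r} ∧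
    ∀ p : ℤ, Prime p → p ∣ v → ¬ IsUnit (φ p) := by
  obtain ⟨n, hn⟩ : ∃ n, r.natAbs = n := ⟨_, rfl⟩
  induction n using Nat.strong_induction_on generalizing r with
  | _ n ih =>
  by_cases h : ∃ p : ℤ, Prime p ∧ p ∣ r ∧ IsUnit (φ p)
  · obtain ⟨p, hp, ⟨c, rfl⟩, hu⟩ := h
    have hc : c ≠ 0 := by rintro rfl; simp at hr
    have hlt : c.natAbs < n := by
      subst hn
      rw [Int.natAbs_mul]
      have h1 := Int.natAbs_pos.mpr hc
      have h2 : 2 ≤ p.natAbs := (Int.prime_iff_natAbs_prime.mp hp).two_le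
      nlinarith
    obtain ⟨v, hv0, hveq, hvp⟩ := ih c.natAbs hlt c hc rfl
    refine ⟨v, hv0, ?_, hvp⟩
    rw [hveq, map_mul, Ideal.span_singleton_mul_left_unit hu]
  · exact ⟨r, hr, rfl, fun p hp hpr hpu => h ⟨p, hp, hpr, hpu⟩⟩


theorem coprime_S {v : ℤ} (hv : ∀ p : ℤ, Prime p → p ∣ v → ¬ IsUnit (φ p))
    {s : ℤ} (hs : s ∈ S) : IsCoprime v s := by
  rw [Int.isCoprime_iff_gcd_eq_one]
  by_contra h
  obtain ⟨p, hp, hpg⟩ := Nat.exists_prime_and_dvd h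
  have hpz : ((p:ℤ)) ∣ (Int.gcd v s : ℤ) := Int.natCast_dvd_natCast.mpr hpg
  have hpv : (p:ℤ) ∣ v := hpz.trans (Int.gcd_dvd_left v s)
  have hps : (p:ℤ) ∣ s := hpz.trans (Int.gcd_dvd_right v s)
  exact hv p ((Int.prime_iff_natAbs_prime.mpr (by simpa using hp))) hpv (unit_of_dvd_S S hs hps)

theorem phi_inj (h0 : (0:ℤ) ∉ S) : Function.Injective (φ) :=
  IsLocalization.injective _ (le_nonZeroDivisors_of_noZeroDivisors h0)


theorem card_quot_span (h0 : (0:ℤ) ∉ S) (v : ℤ) (hv0 : v ≠ 0)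
    (hv : ∀ p : ℤ, Prime p → p ∣ v → ¬ IsUnit (φ p)) :
    Nat.card ((Localization S) ⧸ Ideal.span {φ v}) = v.natAbs := by
  set ψ : ℤ →+* (Localization S) ⧸ Ideal.span {φ v} :=
    (Ideal.Quotient.mk _).comp (φ) with hψ
  have hsurj : Function.Surjective ψ := by
    intro q
    obtain ⟨x, rfl⟩ := Ideal.Quotient.mk_surjective q
    obtain ⟨⟨r, s⟩, hrs⟩ := IsLocalization.mk'_surjective S x
    dsimp only at hrs; subst hrs
    obtain ⟨a, b, hab⟩ : IsCoprime v (s:ℤ) := coprime_S S hv s.2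
    refine ⟨b * r, ?_⟩
    rw [hψ, RingHom.comp_apply, Ideal.Quotient.mk_eq_mk_iff_sub_mem]
    have key : φ (b * r) - IsLocalization.mk' (Localization S) r s
        = (- (IsLocalization.mk' (Localization S) r s * φ a)) * φ v := by
      have hspec := IsLocalization.mk'_spec (Localization S) r s
      have : (IsLocalization.mk' (Localization S) r s) * φ (a * v + b * (s:ℤ))
          = IsLocalization.mk' (Localization S) r s * φ (a*v) + φ (b * r) := by
        rw [map_add, mul_add]
        congr 1
        rw [show (b:ℤ) * (s:ℤ) = (s:ℤ) * b by ring, map_mul, map_mul, ← mul_assoc, hspec]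
        ring
      rw [hab, map_one, mul_one] at this
      rw [map_mul] at this ⊢
      rw [map_mul φ b r] at this
      linear_combination (-1 : Localization S) * this
    rw [key]
    exact Ideal.mul_mem_left _ _ (Ideal.subset_span rfl)
  have hker : RingHom.ker ψ = Ideal.span {v} := by
    ext m
    simp only [RingHom.mem_ker, hψ, RingHom.comp_apply, Ideal.Quotient.eq_zero_iff_mem,
      Ideal.mem_span_singleton]
    constructor
    · intro hm
      obtain ⟨x, hx⟩ := hm
      obtain ⟨⟨r, s⟩, hrs⟩ := IsLocalization.mk'_surjective S x
      dsimp only at hrs; subst hrs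
      have hspec := IsLocalization.mk'_spec (Localization S) r s
      have : φ (m * s) = φ (v * r) := by
        rw [map_mul, map_mul, hx, mul_assoc, hspec]
      have hz : m * (s:ℤ) = v * r := phi_inj S h0 this
      have hcop : IsCoprime v (s:ℤ) := coprime_S S hv s.2
      exact hcop.dvd_of_dvd_mul_right ⟨r, hz⟩
    · rintro ⟨c, rfl⟩
      rw [map_mul]
      exact Dvd.intro _ rfl
  have e1 : (ℤ ⧸ Ideal.span {v}) ≃+* (Localization S) ⧸ Ideal.span {φ v} :=
    hker ▸ RingHom.quotientKerEquivOfSurjective hsurj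
  rw [← Nat.card_congr e1.toEquiv, Nat.card_congr (Int.quotientSpanEquivZMod v).toEquiv,
    Nat.card_zmod]

theorem key_L (h0 : (0:ℤ) ∉ S) (d : Localization S) (hd : d ≠ 0) :
    Ideal.span {d} = Ideal.span {((Nat.card ((Localization S) ⧸ Ideal.span {d}) : ℕ) : Localization S)} := by
  haveI : IsDomain (Localization S) :=
    IsLocalization.isDomain_localization (le_nonZeroDivisors_of_noZeroDivisors h0)
  obtain ⟨⟨r, s⟩, hrs⟩ := IsLocalization.mk'_surjective S d
  dsimp only at hrs; subst hrs
  have hr : r ≠ 0 := by rintro rfl; rw [IsLocalization.mk'_zero] at hd; exact hd rfl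
  have h1 : Ideal.span {IsLocalization.mk' (Localization S) r s} = Ideal.span {φ r} := by
    rw [← IsLocalization.mk'_spec (Localization S) r s,
      Ideal.span_singleton_mul_right_unit (IsLocalization.map_units _ s)]
  obtain ⟨v, hv0, hveq, hvp⟩ := reduce S r hr
  have h2 : Ideal.span {IsLocalization.mk' (Localization S) r s} = Ideal.span {φ v} :=
    h1.trans hveq.symm
  rw [h2, card_quot_span S h0 v hv0 hvp]
  have h3 : ((v.natAbs : ℕ) : Localization S) = φ ((v.natAbs : ℤ)) := by
    rw [eq_intCast (φ), Int.cast_natCast]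
  rw [h3]
  exact Ideal.span_singleton_eq_span_singleton.mpr ((Int.associated_natAbs v).map (φ))

end Arithmetic

theorem pi_span {R : Type*} [CommRing R] {n : ℕ} (a : Fin n → R) :
    span R (Set.range fun i => a i • (Pi.single i 1 : Fin n → R)) =
      Submodule.pi Set.univ (fun i => Ideal.span {a i}) := by
  apply le_antisymm
  · rw [span_le]
    rintro _ ⟨i, rfl⟩ j -
    rcases eq_or_ne i j with rfl | hij
    · simpa using Ideal.mem_span_singleton_self (a i)
    · simp [Pi.single_eq_of_ne (Ne.symm hij) ]
  · intro g hg
    have : g = ∑ j : Fin n, Pi.single j (g j) := by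
      ext k; simp [Finset.sum_apply, Pi.single_apply, Finset.sum_ite_eq' Finset.univ k]
    rw [this]
    refine Submodule.sum_mem _ fun j _ => ?_
    obtain ⟨c, hc⟩ := Ideal.mem_span_singleton'.mp (hg j trivial)
    have : Pi.single j (g j) = c • (a j • (Pi.single j 1 : Fin n → R)) := by
      rw [← hc, smul_smul]
      ext k
      rcases eq_or_ne j k with rfl | h
      · simp
      · simp [Pi.single_eq_of_ne h.symm]
    rw [this]
    exact Submodule.smul_mem _ _ (subset_span ⟨j, rfl⟩)

set_option maxHeartbeats 1000000 in
theorem main_general (A : Type*) [CommRing A] [IsDomain A] [IsPrincipalIdealRing A]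
    {K V : Type*} [Field K] [Algebra A K]
    [AddCommGroup V] [Module K V] [Module A V] [IsScalarTower A K V]
    (hAK : Function.Injective (algebraMap A K))
    (hcard : ∀ d : A, d ≠ 0 →
      Ideal.span {d} = Ideal.span {((Nat.card (A ⧸ Ideal.span {d}) : ℕ) : A)})
    (M N : Submodule A V)
    (hM : IsLattice A K V M) (hN : IsLattice A K V N)
    (hM0 : M ≠ ⊥) (hNM : N ≤ M)
    (hrk : Module.rank A M = Module.rank A N) :
    indexSet A K V M N =
      ↑(span A {((Nat.card (M ⧸ (N.comap M.subtype))) : K)}) := by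
  haveI : NoZeroSMulDivisors A V := by
    constructor
    intro a v hav
    rcases eq_or_ne a 0 with rfl | ha
    · exact Or.inl rfl
    · refine Or.inr ?_
      have h1 : algebraMap A K a • v = 0 := by rwa [algebraMap_smul]
      have h2 : algebraMap A K a ≠ 0 := by
        intro h; exact ha (hAK (by rwa [map_zero]))
      simpa [h2] using smul_eq_zero.mp h1
  haveI : Module.Finite A ↥M := Module.Finite.iff_fg.mpr hM.1
  haveI : Module.Free A ↥M := Module.free_of_finite_type_torsion_free'
  set N' : Submodule A ↥M := N.comap M.subtype with hN'
  obtain ⟨n, snf⟩ := N'.smithNormalForm (Module.Free.chooseBasis A ↥M)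
  set ι := Module.Free.ChooseBasisIndex A ↥M
  haveI : Fintype ι := inferInstance
  have eNN' : (↥N) ≃ₗ[A] (↥N') := (Submodule.comapSubtypeEquivOfLe hNM).symm
  haveI : Module.Finite A ↥N := Module.Finite.iff_fg.mpr hN.1
  haveI : Module.Finite A ↥N' := Module.Finite.equiv eNN'
  have hfrk : Module.finrank A ↥M = Module.finrank A ↥N' := by
    have h1 : Module.rank A ↥M = Module.rank A ↥N' := hrk.trans eNN'.rank_eq
    have h2 := Module.finrank_eq_rank A ↥M
    have h3 := Module.finrank_eq_rank A ↥N'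
    rw [h1, ← h3] at h2
    exact_mod_cast h2
  have hcardn : Fintype.card ι = n := by
    rw [← Module.finrank_eq_card_basis snf.bM, hfrk, Module.finrank_eq_card_basis snf.bN,
      Fintype.card_fin]
  have hfbij : Function.Bijective snf.f := by
    rw [Fintype.bijective_iff_injective_and_card]
    exact ⟨snf.f.injective, by rw [hcardn, Fintype.card_fin]⟩
  set σ : Fin n ≃ ι := Equiv.ofBijective snf.f hfbij with hσ
  set B : Module.Basis (Fin n) A ↥M := snf.bM.reindex σ.symm with hB
  have hBf : ∀ i, B i = snf.bM (snf.f i) := fun i => by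
    rw [hB, Module.Basis.reindex_apply, Equiv.symm_symm, hσ]; rfl
  have hsnfB : ∀ i, ((snf.bN i : ↥M)) = snf.a i • B i := fun i => by
    rw [hBf i]; exact snf.snf i
  set a : Fin n → A := snf.a with haa
  have ha : ∀ i, a i ≠ 0 := by
    intro i hai
    have h1 : (snf.bN i : ↥M) = 0 := by rw [hsnfB i, hai, zero_smul]
    exact snf.bN.ne_zero i (by exact_mod_cast Subtype.ext h1)
  classical
  -- image of N' under coordinates is the product of ideals
  have hmap : N'.map ((B.equivFun : ↥M ≃ₗ[A] (Fin n → A)) : ↥M →ₗ[A] (Fin n → A)) =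
      Submodule.pi Set.univ (fun i => Ideal.span {a i}) := by
    rw [← pi_span a]
    have h1 : N' = span A (Set.range fun i : Fin n => ((snf.bN i : ↥M))) := by
      conv_lhs => rw [← Submodule.map_subtype_top N']
      rw [← snf.bN.span_eq, Submodule.map_span, ← Set.range_comp]
      rfl
    rw [h1, Submodule.map_span, ← Set.range_comp]
    apply congrArg (span A)
    apply congrArg Set.range
    funext i
    show B.equivFun ((snf.bN i : ↥M)) = _
    rw [hsnfB i, map_smul]
    congr 1
    funext j
    rw [B.equivFun_self]
    simp [Pi.single_apply, eq_comm]
  have eQ1 : (↥M ⧸ N') ≃ₗ[A] ((Fin n → A) ⧸ Submodule.pi Set.univ (fun i => Ideal.span {a i})) :=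
    Submodule.Quotient.equiv N' _ B.equivFun hmap
  have eQ2 := Submodule.quotientPi (fun i : Fin n => Ideal.span {a i})
  have hQcard : Nat.card (↥M ⧸ N') = ∏ i, Nat.card (A ⧸ Ideal.span {a i}) := by
    rw [Nat.card_congr eQ1.toEquiv, Nat.card_congr eQ2.toEquiv, Nat.card_pi]
  have hIdeal : Ideal.span {((Nat.card (↥M ⧸ N') : ℕ) : A)} = Ideal.span {∏ i, a i} := by
    have hc : ((Nat.card (↥M ⧸ N') : ℕ) : A) = ∏ i, ((Nat.card (A ⧸ Ideal.span {a i}) : ℕ) : A) := by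
      rw [hQcard]; push_cast; rfl
    rw [hc, ← Ideal.prod_span_singleton, ← Ideal.prod_span_singleton]
    exact Finset.prod_congr rfl fun i _ => (hcard (a i) (ha i)).symm
  -- spans of M and N in V
  set Bv : Fin n → V := fun i => ((B i : ↥M) : V) with hBv
  have hMspan : span A (Set.range Bv) = M := by
    conv_rhs => rw [← Submodule.map_subtype_top M, ← B.span_eq, Submodule.map_span,
      ← Set.range_comp]
    rfl
  have hN'span : N' = span A (Set.range fun i : Fin n => ((snf.bN i : ↥M))) := by
    conv_lhs => rw [← Submodule.map_subtype_top N']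
    rw [← snf.bN.span_eq, Submodule.map_span, ← Set.range_comp]
    rfl
  have hNspan : span A (Set.range fun i => a i • Bv i) = N := by
    have h2 : Submodule.map M.subtype N' = N := by
      rw [hN', Submodule.map_comap_subtype, inf_eq_right.mpr hNM]
    conv_rhs => rw [← h2, hN'span, Submodule.map_span, ← Set.range_comp]
    apply congrArg (span A)
    apply congrArg Set.range
    funext i
    show a i • Bv i = M.subtype ((snf.bN i : ↥M))
    rw [show M.subtype ((snf.bN i : ↥M)) = (((snf.bN i : ↥M) : V)) from rfl, hsnfB i]
    rfl
  -- move to the K-span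
  have hUnion : ((M : Set V) ∪ (N : Set V)) = (M : Set V) :=
    Set.union_eq_self_of_subset_right hNM
  simp only [indexSet]
  rw [hUnion]
  set W := span K (M : Set V) with hW
  have hBvW : ∀ i, Bv i ∈ W := fun i => subset_span (B i).2
  set Bw : Fin n → ↥W := fun i => ⟨Bv i, hBvW i⟩ with hBw
  have hWBv : W = span K (Set.range Bv) := by
    rw [hW, ← hMspan, span_span_of_tower]
  have htop : ⊤ ≤ span K (Set.range Bw) := by
    rintro x -
    have hx' : (x : V) ∈ Submodule.map W.subtype (span K (Set.range Bw)) := by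
      rw [Submodule.map_span, ← Set.range_comp]
      have hxx : (x : V) ∈ span K (Set.range Bv) := by rw [← hWBv]; exact x.2
      exact hxx
    obtain ⟨y, hy, hyx⟩ := hx'
    rwa [show x = y from Subtype.ext hyx.symm]
  have hrankW : Module.finrank K ↥W = n := by
    apply Module.finrank_eq_of_rank_eq
    rw [hW, ← hM.2, ← Module.finrank_eq_rank A ↥M, Module.finrank_eq_card_basis snf.bM, hcardn]
  have hcardfin : Fintype.card (Fin n) = Module.finrank K ↥W := by
    rw [hrankW, Fintype.card_fin]
  set Bb : Module.Basis (Fin n) K ↥W := basisOfTopLeSpanOfCardEqFinrank Bw htop hcardfin with hBbdef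
  have hBb : ∀ i, Bb i = Bw i := fun i =>
    congrFun (coe_basisOfTopLeSpanOfCardEqFinrank Bw htop hcardfin) i
  -- n is positive
  have hn0 : n ≠ 0 := by
    intro hn
    apply hM0
    haveI : Subsingleton (↥M) := by
      constructor
      intro x y
      have h1 : B.equivFun x = B.equivFun y := by
        funext i; exact absurd i.2 (by omega)
      have := congrArg B.equivFun.symm h1
      rwa [LinearEquiv.symm_apply_apply, LinearEquiv.symm_apply_apply] at this
    ext x
    simp only [Submodule.mem_bot]
    constructor
    · intro hx
      have : (⟨x, hx⟩ : ↥M) = (0 : ↥M) := Subsingleton.elim _ _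
      exact congrArg Subtype.val this
    · rintro rfl; exact M.zero_mem
  set i0 : Fin n := ⟨0, Nat.pos_of_ne_zero hn0⟩ with hi0
  -- helper : membership of images
  have himage : ∀ (u : ↥W →ₗ[K] ↥W), (∀ i, ((u (Bw i) : V)) ∈ N) →
      ∀ x : ↥W, (x : V) ∈ M → ((u x : V)) ∈ N := by
    intro u hu x hx
    rw [← hMspan] at hx
    obtain ⟨m, hm⟩ := (mem_span_range_iff_exists_fun A).mp hx
    have hxsum : x = ∑ i, m i • Bw i := by
      apply Subtype.ext
      rw [← hm]
      simp [hBw]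
    have h3 : u x = ∑ i, m i • u (Bw i) := by
      rw [hxsum, map_sum]
      exact Finset.sum_congr rfl fun i _ => u.map_smul_of_tower (m i) (Bw i)
    have h4 : ((u x : V)) = ∑ i, m i • ((u (Bw i) : V)) := by
      rw [h3]; simp
    rw [h4]
    exact Submodule.sum_mem _ fun i _ => N.smul_mem _ (hu i)
  -- span equalities in K
  have hmapspan : ∀ x : A, Submodule.map (Algebra.linearMap A K) (Ideal.span {x})
      = span A {algebraMap A K x} := by
    intro x
    rw [Ideal.span, Submodule.map_span, Set.image_singleton]
    rfl
  have hspanK : span A {((Nat.card (↥M ⧸ N') : ℕ) : K)} =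
      span A {algebraMap A K (∏ i, a i)} := by
    have h1 : ((Nat.card (↥M ⧸ N') : ℕ) : K)
        = algebraMap A K ((Nat.card (↥M ⧸ N') : ℕ) : A) := by
      rw [map_natCast]
    rw [h1, ← hmapspan, ← hmapspan, hIdeal]
  ext d
  simp only [Set.mem_setOf_eq, SetLike.mem_coe]
  rw [hspanK]
  constructor
  · rintro ⟨u, rfl, hu⟩
    have hcol : ∀ j, ∃ c : Fin n → A, ∑ i, c i • (a i • Bv i) = ((u (Bw j) : V)) := by
      intro j
      have h5 := hu (Bw j) (B j).2
      rw [← hNspan] at h5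
      exact (mem_span_range_iff_exists_fun A).mp h5
    choose c hc using hcol
    have hrepr : ∀ j i, Bb.repr (u (Bb j)) i = algebraMap A K (c j i * a i) := by
      intro j i
      have h5 : u (Bb j) = ∑ i, (algebraMap A K (c j i * a i)) • Bb i := by
        apply Subtype.ext
        have h6 : ((∑ i, (algebraMap A K (c j i * a i)) • Bb i : ↥W) : V)
            = ∑ i, (c j i * a i) • Bv i := by
          push_cast [hBb]
          exact Finset.sum_congr rfl fun i _ => by rw [← map_mul, algebraMap_smul]
        rw [h6, hBb j]
        rw [show ((u (Bw j) : V)) = _ from (hc j).symm]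
        exact Finset.sum_congr rfl fun i _ => by rw [smul_smul]
      rw [h5, Bb.repr_sum_self]
    have hdet : LinearMap.det u
        = algebraMap A K ((∏ i, a i) * Matrix.det (Matrix.of fun i j => c j i)) := by
      rw [← LinearMap.det_toMatrix Bb u]
      have h7 : LinearMap.toMatrix Bb Bb u
          = (Matrix.of fun i j => c j i * a i).map (algebraMap A K) := by
        ext i j
        rw [LinearMap.toMatrix_apply, hrepr j i]
        rfl
      rw [h7, ← RingHom.mapMatrix_apply, ← RingHom.map_det]
      congr 1
      have h8 : (Matrix.of fun i j => c j i * a i)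
          = (Matrix.diagonal a) * (Matrix.of fun i j => c j i) := by
        ext i j
        rw [Matrix.diagonal_mul]
        simp [mul_comm]
      rw [h8, Matrix.det_mul, Matrix.det_diagonal]
    rw [hdet]
    rw [mem_span_singleton]
    exact ⟨Matrix.det (Matrix.of fun i j => c j i), by
      rw [Algebra.smul_def, ← map_mul, mul_comm]⟩
  · intro hd
    rw [mem_span_singleton] at hd
    obtain ⟨t, ht⟩ := hd
    set w : Fin n → A := fun i => if i = i0 then t * a i else a i with hw
    set Dm : Matrix (Fin n) (Fin n) K := (Matrix.diagonal w).map (algebraMap A K) with hDm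
    set u : ↥W →ₗ[K] ↥W := Matrix.toLin Bb Bb Dm with hu
    have hprodw : ∏ i, w i = t * ∏ i, a i := by
      rw [hw]
      rw [show (fun i => if i = i0 then t * a i else a i)
          = fun i => (if i = i0 then t else 1) * a i from funext fun i => by
        by_cases hii : i = i0 <;> simp [hii]]
      rw [Finset.prod_mul_distrib]
      congr 1
      simp [Finset.prod_ite_eq' Finset.univ i0 (fun _ => t)]
    refine ⟨u, ?_, ?_⟩
    · rw [hu, ← LinearMap.det_toMatrix Bb, LinearMap.toMatrix_toLin, hDm, ← RingHom.mapMatrix_apply, ← RingHom.map_det,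
        Matrix.det_diagonal, hprodw, ← ht, map_mul, Algebra.smul_def]
    · have hubw : ∀ i, u (Bw i) = algebraMap A K (w i) • Bw i := by
        intro i
        rw [← hBb i, hu]
        rw [Matrix.toLin_self]
        rw [Finset.sum_eq_single i]
        · rw [hDm]
          simp [Matrix.diagonal_apply_eq]
        · intro b _ hbi
          rw [hDm]
          simp [Matrix.diagonal_apply_ne _ hbi]
        · intro hni
          exact absurd (Finset.mem_univ i) hni
      apply himage
      intro i
      rw [hubw i]
      have hcoe : ((algebraMap A K (w i) • Bw i : ↥W) : V) = w i • Bv i := by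
        rw [show ((algebraMap A K (w i) • Bw i : ↥W) : V)
            = algebraMap A K (w i) • Bv i from rfl, algebraMap_smul]
      rw [hcoe]
      have hNi : a i • Bv i ∈ N := by
        rw [← hNspan]; exact subset_span ⟨i, rfl⟩
      rw [hw]
      by_cases hii : i = i0
      · simp only [if_pos hii]
        rw [mul_smul]
        exact N.smul_mem t hNi
      · simp only [if_neg hii]
        exact hNi

/-- For A = S⁻¹ℤ a localization of ℤ away from 0, and N ⊆ M lattices of equal rank,
[M:N]'_A is the principal ideal of A generated by the group index [M:N] = #(M/N). -/
theorem stmt_14 (S : Submonoid ℤ) (h0 : (0 : ℤ) ∉ S)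
    {K V : Type*} [Field K] [Algebra (Localization S) K]
    [AddCommGroup V] [Module K V] [Module (Localization S) V]
    [IsScalarTower (Localization S) K V]
    (hAK : Function.Injective (algebraMap (Localization S) K))
    (M N : Submodule (Localization S) V)
    (hM : IsLattice (Localization S) K V M) (hN : IsLattice (Localization S) K V N)
    (hM0 : M ≠ ⊥) (hNM : N ≤ M)
    (hrk : Module.rank (Localization S) M = Module.rank (Localization S) N) :
    indexSet (Localization S) K V M N =
      ↑(span (Localization S) {((Nat.card (M ⧸ (N.comap M.subtype))) : K)}) := by
  haveI hdom : IsDomain (Localization S) :=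
    IsLocalization.isDomain_localization (le_nonZeroDivisors_of_noZeroDivisors h0)
  haveI hpid : IsPrincipalIdealRing (Localization S) := by
    constructor
    intro I
    have h1 := IsLocalization.map_comap S (Localization S) I
    obtain ⟨x, hx⟩ := (IsPrincipalIdealRing.principal
      (I.comap (algebraMap ℤ (Localization S)))).principal
    refine ⟨algebraMap ℤ (Localization S) x, ?_⟩
    rw [← h1, Ideal.under_def, hx]
    simp [Ideal.map_span, Ideal.submodule_span_eq]
  exact main_general (Localization S) hAK (key_L S h0) M N hM hN hM0 hNM hrk
end
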